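/- arXiv:math/0506607 — 3 statements merged into one kernel-verified Lean document; each statement's English description precedes it below -/
import Mathlib

section
/- Let d ≥ 2, let f : ℝ^d → ℝ be an integrable probability density with compact support, and let φ : ℝ → ℝ be bounded, measurable and compactly supported. Fix j ∈ ℕ and suppose C_j(f) = 0. Then the projections coincide: for every x ∈ ℝ^d, Σ_{k∈ℤ^d} α_{jk}(f) Φ_{jk}(x) = ∏_{ℓ=1}^d ( Σ_{k^ℓ∈ℤ} α_{jk^ℓ}(f^{*ℓ}) φ_{jk^ℓ}(x^ℓ) ), where all sums have only finitely many nonzero terms. -/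
open MeasureTheory
open scoped ENNReal NNReal

/-- `φ_{jk}(x) = 2^{j/2} φ(2^j x − k)`. -/
noncomputable def phiW (φ : ℝ → ℝ) (j : ℕ) (k : ℤ) (x : ℝ) : ℝ :=
  (2 : ℝ) ^ ((j : ℝ) / 2) * φ ((2 : ℝ) ^ (j : ℕ) * x - (k : ℝ))

/-- `Φ_{jk}(x) = φ_{jk¹}(x¹)⋯φ_{jk^d}(x^d)`. -/
noncomputable def PhiW (d : ℕ) (φ : ℝ → ℝ) (j : ℕ) (k : Fin d → ℤ) (x : Fin d → ℝ) : ℝ :=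
  ∏ ℓ, phiW φ j (k ℓ) (x ℓ)

/-- The ℓ-th marginal `f^{*ℓ}` of `f : ℝ^d → ℝ`. -/
noncomputable def marg (d : ℕ) (f : (Fin d → ℝ) → ℝ) (ℓ : Fin d) (y : ℝ) : ℝ :=
  ∫ z : {i : Fin d // i ≠ ℓ} → ℝ, f (fun i => if h : i = ℓ then y else z ⟨i, h⟩)

/-- Wavelet coefficient `α_{jk}(f) = ∫ f Φ_{jk}`. -/
noncomputable def alphaW (d : ℕ) (φ : ℝ → ℝ) (j : ℕ) (k : Fin d → ℤ)
    (f : (Fin d → ℝ) → ℝ) : ℝ :=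
  ∫ x : Fin d → ℝ, f x * PhiW d φ j k x

/-- One-dimensional wavelet coefficient `α_{jk}(g) = ∫ g φ_{jk}`. -/
noncomputable def alpha1 (φ : ℝ → ℝ) (j : ℕ) (k : ℤ) (g : ℝ → ℝ) : ℝ :=
  ∫ y : ℝ, g y * phiW φ j k y

/-- The wavelet contrast `C_j(f)`. -/
noncomputable def contrastW (d : ℕ) (φ : ℝ → ℝ) (j : ℕ) (f : (Fin d → ℝ) → ℝ) : ℝ :=
  ∑' k : Fin d → ℤ, (alphaW d φ j k f - ∏ ℓ, alpha1 φ j (k ℓ) (marg d f ℓ)) ^ 2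

lemma int_abs_finite (c R : ℝ) : {k : ℤ | |c - (k : ℝ)| ≤ R}.Finite := by
  apply (Set.finite_Icc ⌈c - R⌉ ⌊c + R⌋).subset
  intro k hk
  simp only [Set.mem_setOf_eq, abs_le] at hk
  rw [Set.mem_Icc]
  exact ⟨Int.ceil_le.mpr (by linarith [hk.2]), Int.le_floor.mpr (by linarith [hk.1])⟩

lemma prod_tsum_of_finite_support (d : ℕ) (h : Fin d → ℤ → ℝ)
    (hfin : ∀ ℓ, (Function.support (h ℓ)).Finite) :
    ∑' k : Fin d → ℤ, ∏ ℓ, h ℓ (k ℓ) = ∏ ℓ, ∑' m : ℤ, h ℓ m := by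
  have hTsum : ∀ ℓ, ∑' m : ℤ, h ℓ m = ∑ m ∈ (hfin ℓ).toFinset, h ℓ m := by
    intro ℓ
    apply tsum_eq_sum
    intro m hm
    by_contra h0
    exact hm ((hfin ℓ).mem_toFinset.mpr h0)
  calc ∑' k : Fin d → ℤ, ∏ ℓ, h ℓ (k ℓ)
      = ∑ k ∈ Fintype.piFinset (fun ℓ => (hfin ℓ).toFinset), ∏ ℓ, h ℓ (k ℓ) := by
        apply tsum_eq_sum
        intro k hk
        rw [Fintype.mem_piFinset] at hk
        push_neg at hk
        obtain ⟨ℓ, hℓ⟩ := hk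
        apply Finset.prod_eq_zero (Finset.mem_univ ℓ)
        by_contra h0
        exact hℓ ((hfin ℓ).mem_toFinset.mpr h0)
    _ = ∏ ℓ, ∑ m ∈ (hfin ℓ).toFinset, h ℓ m := (Finset.prod_univ_sum _ _).symm
    _ = ∏ ℓ, ∑' m : ℤ, h ℓ m := Finset.prod_congr rfl (fun ℓ _ => (hTsum ℓ).symm)

/-- If `f` is a compactly supported integrable probability density, `φ` is bounded,
measurable and compactly supported, and `C_j(f) = 0`, then the projections coincide:
for every `x`, `Σ_k α_{jk}(f) Φ_{jk}(x) = ∏_ℓ Σ_{k^ℓ} α_{jk^ℓ}(f^{*ℓ}) φ_{jk^ℓ}(x^ℓ)`,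
all sums having only finitely many nonzero terms. -/
theorem projections_coincide_of_contrast_eq_zero
    (d : ℕ) (hd : 2 ≤ d) (φ : ℝ → ℝ) (hφm : Measurable φ)
    (hφb : ∃ M, ∀ x, |φ x| ≤ M) (hφc : HasCompactSupport φ)
    (f : (Fin d → ℝ) → ℝ) (hf : Integrable f) (hf0 : ∀ x, 0 ≤ f x)
    (hfint : ∫ x, f x = 1) (hfc : HasCompactSupport f)
    (j : ℕ) (hC : contrastW d φ j f = 0) :
    ∀ x : Fin d → ℝ,
      {k : Fin d → ℤ | alphaW d φ j k f * PhiW d φ j k x ≠ 0}.Finite ∧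
      (∀ ℓ, {kl : ℤ | alpha1 φ j kl (marg d f ℓ) * phiW φ j kl (x ℓ) ≠ 0}.Finite) ∧
      (∑' k : Fin d → ℤ, alphaW d φ j k f * PhiW d φ j k x)
        = ∏ ℓ, ∑' kl : ℤ, alpha1 φ j kl (marg d f ℓ) * phiW φ j kl (x ℓ) := by
  obtain ⟨R, hR⟩ := hφc.isBounded.subset_closedBall 0
  obtain ⟨B, hB⟩ := hfc.isBounded.subset_closedBall 0
  have h2pos : (0:ℝ) < (2:ℝ) ^ (j:ℕ) := by positivity
  -- if phiW is nonzero, the argument lies in a ball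
  have hphi : ∀ (k : ℤ) (y : ℝ), phiW φ j k y ≠ 0 → |(2:ℝ) ^ (j:ℕ) * y - (k:ℝ)| ≤ R := by
    intro k y hne
    have h1 : φ ((2:ℝ) ^ (j:ℕ) * y - (k:ℝ)) ≠ 0 := by
      intro h0
      exact hne (by simp [phiW, h0])
    have := hR (subset_tsupport φ h1)
    simpa [Metric.mem_closedBall, Real.dist_eq] using this
  -- f's support bounds coordinates
  have hfB : ∀ p : Fin d → ℝ, f p ≠ 0 → ∀ ℓ, |p ℓ| ≤ B := by
    intro p hp ℓ
    have hmem := hB (subset_tsupport f hp)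
    rw [Metric.mem_closedBall, dist_zero_right] at hmem
    calc |p ℓ| = ‖p ℓ‖ := (Real.norm_eq_abs _).symm
      _ ≤ ‖p‖ := norm_le_pi_norm p ℓ
      _ ≤ B := hmem
  -- marginals vanish outside [-B, B]
  have hmarg : ∀ (ℓ : Fin d) (y : ℝ), B < |y| → marg d f ℓ y = 0 := by
    intro ℓ y hy
    unfold marg
    have hz : ∀ z : {i : Fin d // i ≠ ℓ} → ℝ,
        f (fun i => if h : i = ℓ then y else z ⟨i, h⟩) = 0 := by
      intro z
      by_contra hne
      have := hfB _ hne ℓ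
      rw [dif_pos rfl] at this
      linarith
    simp only [hz, integral_zero]
  -- finiteness of 1-d coefficient supports
  have h1sup : ∀ ℓ, {m : ℤ | alpha1 φ j m (marg d f ℓ) ≠ 0}.Finite := by
    intro ℓ
    apply (int_abs_finite 0 ((2:ℝ) ^ (j:ℕ) * B + R)).subset
    intro m hm
    simp only [Set.mem_setOf_eq] at hm ⊢
    have hex : ∃ y, marg d f ℓ y * phiW φ j m y ≠ 0 := by
      by_contra hall
      push_neg at hall
      exact hm (by unfold alpha1; simp only [hall, integral_zero])
    obtain ⟨y, hy⟩ := hex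
    have hy1 : marg d f ℓ y ≠ 0 := fun h0 => hy (by rw [h0, zero_mul])
    have hy2 : phiW φ j m y ≠ 0 := fun h0 => hy (by rw [h0, mul_zero])
    have hyB : |y| ≤ B := by
      by_contra hlt
      push_neg at hlt
      exact hy1 (hmarg ℓ y hlt)
    have hbd := hphi m y hy2
    rw [abs_le] at hbd hyB ⊢
    constructor <;> nlinarith [h2pos.le]
  -- finiteness of alphaW support
  have hαsup : {k : Fin d → ℤ | alphaW d φ j k f ≠ 0}.Finite := by
    apply (Set.Finite.pi (fun _ : Fin d =>
      int_abs_finite 0 ((2:ℝ) ^ (j:ℕ) * B + R))).subset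
    intro k hk
    simp only [Set.mem_setOf_eq] at hk
    have hex : ∃ p, f p * PhiW d φ j k p ≠ 0 := by
      by_contra hall
      push_neg at hall
      exact hk (by unfold alphaW; simp only [hall, integral_zero])
    obtain ⟨p, hp⟩ := hex
    have hp1 : f p ≠ 0 := fun h0 => hp (by rw [h0, zero_mul])
    have hp2 : PhiW d φ j k p ≠ 0 := fun h0 => hp (by rw [h0, mul_zero])
    rw [Set.mem_pi]
    intro ℓ _
    have hφℓ : phiW φ j (k ℓ) (p ℓ) ≠ 0 := by
      intro h0
      exact hp2 (Finset.prod_eq_zero (Finset.mem_univ ℓ) h0)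
    have hbd := hphi (k ℓ) (p ℓ) hφℓ
    have hpB := hfB p hp1 ℓ
    simp only [Set.mem_setOf_eq]
    rw [abs_le] at hbd hpB ⊢
    constructor <;> nlinarith [h2pos.le]
  -- support of the product coefficients is finite
  have hprodsup : {k : Fin d → ℤ | (∏ ℓ, alpha1 φ j (k ℓ) (marg d f ℓ)) ≠ 0}.Finite := by
    apply (Set.Finite.pi (fun ℓ => h1sup ℓ)).subset
    intro k hk
    rw [Set.mem_pi]
    intro ℓ _
    simp only [Set.mem_setOf_eq] at hk ⊢
    exact fun h0 => hk (Finset.prod_eq_zero (Finset.mem_univ ℓ) h0)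
  -- the contrast terms are summable (finite support)
  have hsum : Summable (fun k : Fin d → ℤ =>
      (alphaW d φ j k f - ∏ ℓ, alpha1 φ j (k ℓ) (marg d f ℓ)) ^ 2) := by
    apply summable_of_finite_support
    apply (hαsup.union hprodsup).subset
    intro k hk
    simp only [Function.mem_support] at hk
    by_contra hmem
    simp only [Set.mem_union, Set.mem_setOf_eq, not_or, not_not] at hmem
    exact hk (by rw [hmem.1, hmem.2, sub_self]; ring)
  -- each term of the contrast is zero
  have hterm : ∀ k : Fin d → ℤ,
      alphaW d φ j k f = ∏ ℓ, alpha1 φ j (k ℓ) (marg d f ℓ) := by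
    intro k
    have h1 := Summable.le_tsum hsum k (fun _ _ => sq_nonneg _)
    unfold contrastW at hC
    rw [hC] at h1
    have h2 := sq_nonneg (alphaW d φ j k f - ∏ ℓ, alpha1 φ j (k ℓ) (marg d f ℓ))
    have h3 : (alphaW d φ j k f - ∏ ℓ, alpha1 φ j (k ℓ) (marg d f ℓ)) ^ 2 = 0 :=
      le_antisymm h1 h2
    have h4 := (pow_eq_zero_iff two_ne_zero).mp h3
    linarith [sub_eq_zero.mp h4]
  intro x
  have hhsup : ∀ ℓ : Fin d,
      (Function.support (fun m : ℤ =>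
        alpha1 φ j m (marg d f ℓ) * phiW φ j m (x ℓ))).Finite := by
    intro ℓ
    apply (int_abs_finite ((2:ℝ) ^ (j:ℕ) * x ℓ) R).subset
    intro m hm
    simp only [Function.mem_support] at hm
    have hφℓ : phiW φ j m (x ℓ) ≠ 0 := fun h0 => hm (by rw [h0, mul_zero])
    exact hphi m (x ℓ) hφℓ
  have hF : ∀ k : Fin d → ℤ, alphaW d φ j k f * PhiW d φ j k x
      = ∏ ℓ, alpha1 φ j (k ℓ) (marg d f ℓ) * phiW φ j (k ℓ) (x ℓ) := by
    intro k
    rw [hterm k]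
    unfold PhiW
    rw [← Finset.prod_mul_distrib]
  refine ⟨?_, fun ℓ => hhsup ℓ, ?_⟩
  · apply (Set.Finite.pi (fun ℓ => hhsup ℓ)).subset
    intro k hk
    simp only [Set.mem_setOf_eq] at hk
    rw [hF k] at hk
    rw [Set.mem_pi]
    intro ℓ _
    simp only [Function.mem_support]
    exact fun h0 => hk (Finset.prod_eq_zero (Finset.mem_univ ℓ) h0)
  · rw [tsum_congr hF]
    exact prod_tsum_of_finite_support d
      (fun ℓ m => alpha1 φ j m (marg d f ℓ) * phiW φ j m (x ℓ)) hhsup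
end

section
/- Let d ≥ 2, 1 ≤ p < ∞, 1 ≤ q < ∞, s > 0, and set k = ⌊s⌋ + 1 (so that k > s). Let f : ℝ^d → ℝ be integrable with f ∈ L_p(ℝ^d) and support contained in the unit cube [0,1]^d. Then for every ℓ ∈ {1,…,d}, ∫_0^∞ ( t^{−s} ω^k(f^{*ℓ}, t)_p )^q dt/t ≤ ∫_0^∞ ( t^{−s} Ω^k(f, t)_p )^q dt/t, where ω^k(f^{*ℓ}, δ)_p = sup_{|t|≤δ} ‖Δ^k_t f^{*ℓ}‖_{L_p(ℝ)}. In particular, if the right-hand side is finite then so is the left-hand side. -/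
open MeasureTheory
open scoped ENNReal NNReal

/-- First-order difference `Δ_h f (x) = f(x+h) − f(x)`. -/
def diffOp {α : Type*} [Add α] (h : α) (f : α → ℝ) : α → ℝ := fun x => f (x + h) - f x

/-- k-th order difference `Δ^k_h f = Δ_h (Δ^{k−1}_h f)`. -/
def diffIter {α : Type*} [Add α] (k : ℕ) (h : α) (f : α → ℝ) : α → ℝ := (diffOp h)^[k] f

/-- Modulus of continuity of order `k` of a univariate function:
`ω^k(g,δ)_p = sup_{|t|≤δ} ‖Δ^k_t g‖_{L_p(ℝ)}`. -/
noncomputable def omegaU (k : ℕ) (p : ℝ≥0∞) (g : ℝ → ℝ) (δ : ℝ) : ℝ≥0∞ :=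
  ⨆ (t : ℝ) (_ : |t| ≤ δ), eLpNorm (diffIter k t g) p volume

/-- Modulus of continuity of order `k` of `f : ℝ^d → ℝ`:
`Ω^k(f,δ)_p = sup_{|h|=1} sup_{|t|≤δ} ‖Δ^k_{th} f‖_p`, over Euclidean unit vectors `h`. -/
noncomputable def OmegaM (d : ℕ) (k : ℕ) (p : ℝ≥0∞) (f : (Fin d → ℝ) → ℝ) (δ : ℝ) : ℝ≥0∞ :=
  ⨆ (h : Fin d → ℝ) (_ : ∑ i, (h i) ^ 2 = 1) (t : ℝ) (_ : |t| ≤ δ),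
    eLpNorm (diffIter k (t • h) f) p volume

/-! ### auxiliary material -/

section Aux

variable {d : ℕ} (ℓ : Fin d)

noncomputable def psiMap (ℓ : Fin d) : ℝ × ({i : Fin d // i ≠ ℓ} → ℝ) → (Fin d → ℝ) :=
  fun yz i => if h : i = ℓ then yz.1 else yz.2 ⟨i, h⟩

def eVec (ℓ : Fin d) : Fin d → ℝ := fun i => if i = ℓ then 1 else 0

instance uniqueEqSub : Unique {i : Fin d // i = ℓ} := ⟨⟨⟨ℓ, rfl⟩⟩, fun a => Subtype.ext a.prop⟩

noncomputable def Teq (ℓ : Fin d) : (Fin d → ℝ) ≃ᵐ ℝ × ({i : Fin d // i ≠ ℓ} → ℝ) :=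
  (MeasurableEquiv.piEquivPiSubtypeProd (fun _ : Fin d => ℝ) (fun i => i = ℓ)).trans
    ((MeasurableEquiv.funUnique {i : Fin d // i = ℓ} ℝ).prodCongr (MeasurableEquiv.refl _))

theorem Teq_measurePreserving : MeasurePreserving (Teq ℓ) volume volume := by
  have h1 := MeasureTheory.volume_preserving_piEquivPiSubtypeProd (fun _ : Fin d => ℝ)
    (fun i => i = ℓ)
  have h2 := (MeasureTheory.volume_preserving_funUnique {i : Fin d // i = ℓ} ℝ).prod
    (MeasurePreserving.id (volume : Measure ({i : Fin d // ¬ i = ℓ} → ℝ)))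
  rw [← Measure.volume_eq_prod] at h2
  have hF : (Subtype.fintype (fun i : Fin d => i = ℓ))
      = (Unique.fintype : Fintype {i : Fin d // i = ℓ}) := Subsingleton.elim _ _
  rw [hF] at h1
  exact h2.comp h1

theorem psiMap_eq : psiMap ℓ = ⇑(Teq ℓ).symm := by
  funext yz
  apply (Teq ℓ).injective
  rw [MeasurableEquiv.apply_symm_apply]
  have hdef : ((default : {i : Fin d // i = ℓ}) : Fin d) = ℓ := (default : {i : Fin d // i = ℓ}).2
  ext
  · simp [Teq, psiMap, MeasurableEquiv.piEquivPiSubtypeProd, Equiv.piEquivPiSubtypeProd,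
      MeasurableEquiv.funUnique, Equiv.funUnique, MeasurableEquiv.prodCongr, hdef]
  · rename_i j
    simp [Teq, psiMap, MeasurableEquiv.piEquivPiSubtypeProd, Equiv.piEquivPiSubtypeProd,
      MeasurableEquiv.prodCongr, j.2]

theorem psi_measurePreserving : MeasurePreserving (psiMap ℓ) (volume.prod volume) volume := by
  rw [psiMap_eq]
  have := (Teq_measurePreserving ℓ).symm (Teq ℓ)
  rwa [← Measure.volume_eq_prod]

theorem psi_measurableEmbedding : MeasurableEmbedding (psiMap ℓ) := by
  rw [psiMap_eq]; exact (Teq ℓ).symm.measurableEmbedding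

theorem marg_eq (g : (Fin d → ℝ) → ℝ) (y : ℝ) :
    marg d g ℓ y = ∫ z, g (psiMap ℓ (y, z)) := rfl

theorem diffIter_succ {α : Type*} [Add α] (k : ℕ) (h : α) (f : α → ℝ) :
    diffIter (k + 1) h f = diffOp h (diffIter k h f) := by
  simp only [diffIter, Function.iterate_succ_apply']

theorem psi_add (t y : ℝ) (z : {i : Fin d // i ≠ ℓ} → ℝ) :
    psiMap ℓ (y, z) + t • eVec ℓ = psiMap ℓ (y + t, z) := by
  funext i
  by_cases h : i = ℓ <;> simp [psiMap, eVec, h]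

theorem eVec_unit : ∑ i, (eVec ℓ i) ^ 2 = 1 := by
  have h : ∀ i, (eVec ℓ i) ^ 2 = if i = ℓ then (1 : ℝ) else 0 := by
    intro i; by_cases h : i = ℓ <;> simp [eVec, h]
  rw [Finset.sum_congr rfl fun i _ => h i]
  simp

theorem diffIter_integrable {f : (Fin d → ℝ) → ℝ} (hf : Integrable f) (k : ℕ) (h : Fin d → ℝ) :
    Integrable (diffIter k h f) := by
  induction k with
  | zero => exact hf
  | succ n ih =>
    rw [diffIter_succ]
    have ht : Integrable (fun x => diffIter n h f (x + h)) :=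
      ((measurePreserving_add_right volume h).integrable_comp_emb
        (MeasurableEquiv.addRight h).measurableEmbedding).2 ih
    exact ht.sub ih

theorem diffIter_support {f : (Fin d → ℝ) → ℝ}
    (hsupp : Function.support f ⊆ Set.Icc (0 : Fin d → ℝ) 1) (k : ℕ) (t : ℝ) :
    ∀ (y : ℝ) (z : {i : Fin d // i ≠ ℓ} → ℝ),
      z ∉ Set.Icc (0 : {i : Fin d // i ≠ ℓ} → ℝ) 1 →
        diffIter k (t • eVec ℓ) f (psiMap ℓ (y, z)) = 0 := by
  induction k with
  | zero =>
    intro y z hz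
    simp only [diffIter, Function.iterate_zero, id]
    by_contra hne
    refine hz ?_
    have hx := hsupp hne
    rw [Set.mem_Icc] at hx ⊢
    constructor <;> intro j
    · have := hx.1 j.1
      simpa [psiMap, j.2] using this
    · have := hx.2 j.1
      simpa [psiMap, j.2] using this
  | succ n ih =>
    intro y z hz
    rw [diffIter_succ]
    simp only [diffOp, psi_add]
    rw [ih y z hz, ih (y + t) z hz, sub_zero]

end Aux

section Key

variable {d : ℕ} (ℓ : Fin d)

/-- Commutation of marginal with iterated differences, at good points. -/
theorem marg_diffIter_comm {f : (Fin d → ℝ) → ℝ} (t : ℝ) (k : ℕ) :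
    ∀ y : ℝ, (∀ j : ℕ, j ≤ k → Integrable (fun z => f (psiMap ℓ (y + (j : ℝ) * t, z)))) →
      Integrable (fun z => diffIter k (t • eVec ℓ) f (psiMap ℓ (y, z))) ∧
        marg d (diffIter k (t • eVec ℓ) f) ℓ y = diffIter k t (marg d f ℓ) y := by
  induction k with
  | zero =>
    intro y hy
    refine ⟨?_, rfl⟩
    simpa [diffIter] using hy 0 le_rfl
  | succ n ih =>
    intro y hy
    have h1 := ih y (fun j hj => hy j (hj.trans (Nat.le_succ n)))
    have h2 : Integrable (fun z => diffIter n (t • eVec ℓ) f (psiMap ℓ (y + t, z))) ∧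
        marg d (diffIter n (t • eVec ℓ) f) ℓ (y + t) = diffIter n t (marg d f ℓ) (y + t) := by
      refine ih (y + t) (fun j hj => ?_)
      have harith : y + t + (j : ℝ) * t = y + ((j + 1 : ℕ) : ℝ) * t := by push_cast; ring
      rw [harith]
      exact hy (j + 1) (by omega)
    have hfun : (fun z => diffIter (n + 1) (t • eVec ℓ) f (psiMap ℓ (y, z)))
        = fun z => diffIter n (t • eVec ℓ) f (psiMap ℓ (y + t, z))
            - diffIter n (t • eVec ℓ) f (psiMap ℓ (y, z)) := by
      funext z
      rw [diffIter_succ]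
      simp only [diffOp, psi_add]
    constructor
    · rw [hfun]; exact h2.1.sub h1.1
    · have : marg d (diffIter (n + 1) (t • eVec ℓ) f) ℓ y
          = marg d (diffIter n (t • eVec ℓ) f) ℓ (y + t)
            - marg d (diffIter n (t • eVec ℓ) f) ℓ y := by
        rw [marg_eq, marg_eq, marg_eq]
        rw [show (fun z => diffIter (n+1) (t • eVec ℓ) f (psiMap ℓ (y, z))) = _ from hfun]
        exact integral_sub h2.1 h1.1
      rw [this, h1.2, h2.2, diffIter_succ]
      rfl

/-- a.e. commutation. -/
theorem marg_diffIter_comm_ae {f : (Fin d → ℝ) → ℝ} (hf : Integrable f) (t : ℝ) (k : ℕ) :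
    (fun y => diffIter k t (marg d f ℓ) y)
      =ᵐ[volume] fun y => marg d (diffIter k (t • eVec ℓ) f) ℓ y := by
  have hG : Integrable (fun yz => f (psiMap ℓ yz)) (volume.prod volume) :=
    ((psi_measurePreserving ℓ).integrable_comp_emb (psi_measurableEmbedding ℓ)).2 hf
  have hSec : ∀ᵐ y : ℝ, Integrable (fun z => f (psiMap ℓ (y, z))) := hG.prod_right_ae
  have hshift : ∀ c : ℝ, ∀ᵐ y : ℝ, Integrable (fun z => f (psiMap ℓ (y + c, z))) := by
    intro c
    rw [ae_iff] at hSec ⊢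
    have hpre : {y : ℝ | ¬ Integrable (fun z => f (psiMap ℓ (y + c, z)))}
        = (fun y : ℝ => y + c) ⁻¹' {u : ℝ | ¬ Integrable (fun z => f (psiMap ℓ (u, z)))} := rfl
    rw [hpre, measure_preimage_add_right]
    exact hSec
  have hall : ∀ᵐ y : ℝ, ∀ j : ℕ, Integrable (fun z => f (psiMap ℓ (y + (j : ℝ) * t, z))) :=
    (ae_all_iff).2 fun j => hshift ((j : ℝ) * t)
  filter_upwards [hall] with y hy
  exact ((marg_diffIter_comm ℓ t k) y (fun j _ => hy j)).2.symm

end Key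

section ClaimB

variable {d : ℕ} (ℓ : Fin d)

theorem cube_volume_one :
    volume (Set.Icc (0 : {i : Fin d // i ≠ ℓ} → ℝ) 1) = 1 := by
  rw [← Set.pi_univ_Icc, volume_pi_pi]
  simp [Real.volume_Icc]

/-- The marginal of a function supported (slice-wise) in the unit cube has smaller Lp norm. -/
theorem marg_eLpNorm_le {g : (Fin d → ℝ) → ℝ} (hg : Integrable g)
    {p : ℝ} (hp : 1 ≤ p)
    (hgs : ∀ (y : ℝ) (z : {i : Fin d // i ≠ ℓ} → ℝ),
      z ∉ Set.Icc (0 : {i : Fin d // i ≠ ℓ} → ℝ) 1 → g (psiMap ℓ (y, z)) = 0) :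
    eLpNorm (marg d g ℓ) (ENNReal.ofReal p) volume ≤ eLpNorm g (ENNReal.ofReal p) volume := by
  set P := ENNReal.ofReal p with hPdef
  have hp0 : (0 : ℝ) < p := lt_of_lt_of_le one_pos hp
  have hP1 : (1 : ℝ≥0∞) ≤ P := by
    rw [hPdef, ← ENNReal.ofReal_one]
    exact ENNReal.ofReal_le_ofReal hp
  have hP0 : P ≠ 0 := by positivity
  have hPtop : P ≠ ∞ := ENNReal.ofReal_ne_top
  have hPr : P.toReal = p := ENNReal.toReal_ofReal hp0.le
  set Q := Set.Icc (0 : {i : Fin d // i ≠ ℓ} → ℝ) 1 with hQdef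
  have hQ1 : volume Q = 1 := cube_volume_one ℓ
  haveI : IsProbabilityMeasure ((volume : Measure ({i : Fin d // i ≠ ℓ} → ℝ)).restrict Q) :=
    ⟨by rw [Measure.restrict_apply_univ]; exact hQ1⟩
  have hG : Integrable (fun yz => g (psiMap ℓ yz)) (volume.prod volume) :=
    ((psi_measurePreserving ℓ).integrable_comp_emb (psi_measurableEmbedding ℓ)).2 hg
  have hSec : ∀ᵐ y : ℝ, Integrable (fun z => g (psiMap ℓ (y, z))) := hG.prod_right_ae
  -- pointwise bound for good y
  have key : ∀ᵐ y : ℝ, (‖marg d g ℓ y‖₊ : ℝ≥0∞) ^ p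
      ≤ ∫⁻ z, (‖g (psiMap ℓ (y, z))‖₊ : ℝ≥0∞) ^ p := by
    filter_upwards [hSec] with y hy
    have step1 : (‖marg d g ℓ y‖₊ : ℝ≥0∞) ≤ (∫⁻ z, (‖g (psiMap ℓ (y, z))‖₊ : ℝ≥0∞) ^ p) ^ p⁻¹ := by
      calc (‖marg d g ℓ y‖₊ : ℝ≥0∞) = ‖∫ z, g (psiMap ℓ (y, z))‖₊ := by rw [marg_eq]
        _ ≤ ∫⁻ z, ‖g (psiMap ℓ (y, z))‖₊ := enorm_integral_le_lintegral_enorm _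
        _ = ∫⁻ z in Q, ‖g (psiMap ℓ (y, z))‖₊ := by
            refine (setLIntegral_eq_of_support_subset ?_).symm
            intro z hz
            by_contra hzQ
            simp only [Function.mem_support] at hz
            exact hz (by rw [hgs y z hzQ]; simp)
        _ = eLpNorm (fun z => g (psiMap ℓ (y, z))) 1 (volume.restrict Q) := by
            simp only [eLpNorm_one_eq_lintegral_enorm, enorm_eq_nnnorm]
        _ ≤ eLpNorm (fun z => g (psiMap ℓ (y, z))) P (volume.restrict Q) :=
            eLpNorm_le_eLpNorm_of_exponent_le hP1 hy.aestronglyMeasurable.restrict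
        _ = (∫⁻ z in Q, (‖g (psiMap ℓ (y, z))‖₊ : ℝ≥0∞) ^ p) ^ p⁻¹ := by
            simp only [eLpNorm_eq_lintegral_rpow_enorm_toReal hP0 hPtop, enorm_eq_nnnorm, hPr, one_div]
        _ ≤ (∫⁻ z, (‖g (psiMap ℓ (y, z))‖₊ : ℝ≥0∞) ^ p) ^ p⁻¹ :=
            ENNReal.rpow_le_rpow (setLIntegral_le_lintegral _ _) (by positivity)
    calc (‖marg d g ℓ y‖₊ : ℝ≥0∞) ^ p
        ≤ ((∫⁻ z, (‖g (psiMap ℓ (y, z))‖₊ : ℝ≥0∞) ^ p) ^ p⁻¹) ^ p :=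
          ENNReal.rpow_le_rpow step1 hp0.le
      _ = ∫⁻ z, (‖g (psiMap ℓ (y, z))‖₊ : ℝ≥0∞) ^ p := by
          rw [← ENNReal.rpow_mul, inv_mul_cancel₀ hp0.ne', ENNReal.rpow_one]
  -- integrate
  have hGsm : AEStronglyMeasurable (fun yz => g (psiMap ℓ yz)) (volume.prod volume) :=
    hG.aestronglyMeasurable
  have hmain : ∫⁻ y, (‖marg d g ℓ y‖₊ : ℝ≥0∞) ^ p ≤ ∫⁻ x, (‖g x‖₊ : ℝ≥0∞) ^ p := by
    calc ∫⁻ y, (‖marg d g ℓ y‖₊ : ℝ≥0∞) ^ p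
        ≤ ∫⁻ y, ∫⁻ z, (‖g (psiMap ℓ (y, z))‖₊ : ℝ≥0∞) ^ p := lintegral_mono_ae key
      _ = ∫⁻ yz, (‖g (psiMap ℓ yz)‖₊ : ℝ≥0∞) ^ p ∂(volume.prod volume) := by
          exact (lintegral_prod _ (hGsm.enorm.pow_const p)).symm
      _ = ∫⁻ x, (‖g x‖₊ : ℝ≥0∞) ^ p :=
          (psi_measurePreserving ℓ).lintegral_comp_emb (psi_measurableEmbedding ℓ)
            (fun x => (‖g x‖₊ : ℝ≥0∞) ^ p)
  simp only [eLpNorm_eq_lintegral_rpow_enorm_toReal hP0 hPtop, enorm_eq_nnnorm, hPr]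
  exact ENNReal.rpow_le_rpow hmain (by positivity)

end ClaimB

section Assembly

theorem omegaU_le_OmegaM {d : ℕ} (ℓ : Fin d) {p : ℝ} (hp : 1 ≤ p)
    {f : (Fin d → ℝ) → ℝ} (hf : Integrable f)
    (hsupp : Function.support f ⊆ Set.Icc (0 : Fin d → ℝ) 1) (k : ℕ) (δ : ℝ) :
    omegaU k (ENNReal.ofReal p) (marg d f ℓ) δ ≤ OmegaM d k (ENNReal.ofReal p) f δ := by
  refine iSup₂_le fun t ht => ?_
  have step : eLpNorm (diffIter k t (marg d f ℓ)) (ENNReal.ofReal p) volume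
      ≤ eLpNorm (diffIter k (t • eVec ℓ) f) (ENNReal.ofReal p) volume := by
    rw [eLpNorm_congr_ae (marg_diffIter_comm_ae ℓ hf t k)]
    exact marg_eLpNorm_le ℓ (diffIter_integrable hf k _) hp (diffIter_support ℓ hsupp k t)
  refine step.trans ?_
  exact le_iSup_of_le (eVec ℓ) (le_iSup_of_le (eVec_unit ℓ)
    (le_iSup_of_le t (le_iSup_of_le ht le_rfl)))

end Assembly

/-- Besov-seminorm comparison between a density and its marginals: with `k = ⌊s⌋ + 1`,
`∫_0^∞ (t^{−s} ω^k(f^{*ℓ},t)_p)^q dt/t ≤ ∫_0^∞ (t^{−s} Ω^k(f,t)_p)^q dt/t`. -/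
theorem marginal_besov_seminorm_le
    (d : ℕ) (hd : 2 ≤ d) (p q s : ℝ) (hp : 1 ≤ p) (hq : 1 ≤ q) (hs : 0 < s)
    (f : (Fin d → ℝ) → ℝ) (hf : Integrable f)
    (hfLp : MemLp f (ENNReal.ofReal p) volume)
    (hsupp : Function.support f ⊆ Set.Icc (0 : Fin d → ℝ) 1) :
    ∀ ℓ : Fin d,
      (∫⁻ t in Set.Ioi (0 : ℝ),
          (ENNReal.ofReal (t ^ (-s))
              * omegaU (Nat.floor s + 1) (ENNReal.ofReal p) (marg d f ℓ) t) ^ q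
            * ENNReal.ofReal t⁻¹)
        ≤ ∫⁻ t in Set.Ioi (0 : ℝ),
          (ENNReal.ofReal (t ^ (-s))
              * OmegaM d (Nat.floor s + 1) (ENNReal.ofReal p) f t) ^ q
            * ENNReal.ofReal t⁻¹ := by
  intro ℓ
  refine lintegral_mono fun t => ?_
  refine mul_le_mul_left (ENNReal.rpow_le_rpow ?_ (by linarith)) _
  exact mul_le_mul_right (omegaU_le_OmegaM ℓ hp hf hsupp _ t) _
end

section
/- Let d ≥ 1, 1 ≤ p < ∞, 1 ≤ q < ∞, let s with 0 < s < k for an integer k ≥ 1, let A be an invertible d×d real matrix with ‖A⁻¹‖ the operator norm of its inverse, and let f ∈ L_p(ℝ^d). Define f_A(x) = |det A⁻¹| f(A⁻¹ x). Then ( ∫_0^∞ ( t^{−s} Ω^k(f_A, t)_p )^q dt/t )^{1/q} ≤ |det A|^{−1 + 1/p} ‖A⁻¹‖^{s} ( ∫_0^∞ ( u^{−s} Ω^k(f, u)_p )^q du/u )^{1/q}. In particular, if the Besov-type seminorm of f on the right is finite, then so is that of f_A. -/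
open MeasureTheory
open scoped ENNReal NNReal

lemma diffIter_comp_mulVec {d : ℕ} (k : ℕ) (M : Matrix (Fin d) (Fin d) ℝ) (c : ℝ)
    (f : (Fin d → ℝ) → ℝ) (h : Fin d → ℝ) :
    diffIter k h (fun x => c * f (M.mulVec x))
      = fun x => c * diffIter k (M.mulVec h) f (M.mulVec x) := by
  induction k with
  | zero => simp [diffIter]
  | succ n ih =>
    funext x
    simp only [diffIter, Function.iterate_succ_apply'] at ih ⊢
    rw [ih]
    simp only [diffOp, Matrix.mulVec_add]
    ring

lemma OmegaM_mono {d k : ℕ} {P : ℝ≥0∞} {f : (Fin d → ℝ) → ℝ} : Monotone (OmegaM d k P f) := by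
  intro a b hab
  refine iSup_mono fun h => iSup_mono fun hh => iSup_mono fun t => ?_
  exact iSup_le fun ht => le_iSup_of_le (ht.trans hab) le_rfl

lemma eLpNorm_comp_mulVec {d : ℕ} (M : Matrix (Fin d) (Fin d) ℝ) (hM : IsUnit M.det)
    (P : ℝ≥0∞) (hP : P ≠ ∞) (g : (Fin d → ℝ) → ℝ) :
    eLpNorm (fun x => g (M.mulVec x)) P volume
      = ENNReal.ofReal |M.det⁻¹| ^ (1 / P).toReal * eLpNorm g P volume := by
  have hdet : M.det ≠ 0 := hM.ne_zero
  letI := M.invertibleOfIsUnitDet hM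
  set e := M.toLinearEquiv' ‹Invertible M› with he
  have hfun : (fun x : Fin d → ℝ => M.mulVec x) = ⇑(e.toContinuousLinearEquiv) := by
    funext x
    simp [e, Matrix.toLinearEquiv', Matrix.toLin'_apply]
  have hemb : MeasurableEmbedding (fun x : Fin d → ℝ => M.mulVec x) := by
    rw [hfun]
    exact e.toContinuousLinearEquiv.toHomeomorph.measurableEmbedding
  have hmap : Measure.map (fun x : Fin d → ℝ => M.mulVec x) volume
      = ENNReal.ofReal |M.det⁻¹| • volume := by
    have h1 : (fun x : Fin d → ℝ => M.mulVec x) = ⇑(Matrix.toLin' M) := by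
      funext x; simp [Matrix.toLin'_apply]
    have h2 : LinearMap.det (Matrix.toLin' M) ≠ 0 := by
      rw [LinearMap.det_toLin']; exact hdet
    rw [h1, Measure.map_linearMap_addHaar_pi_eq_smul_addHaar h2 volume,
      LinearMap.det_toLin']
  calc eLpNorm (fun x => g (M.mulVec x)) P volume
      = eLpNorm g P (Measure.map (fun x : Fin d → ℝ => M.mulVec x) volume) :=
        (hemb.eLpNorm_map_measure).symm
    _ = ENNReal.ofReal |M.det⁻¹| ^ (1 / P).toReal * eLpNorm g P volume := by
        rw [hmap, eLpNorm_smul_measure_of_ne_top hP, smul_eq_mul]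

lemma lintegral_Ioi_comp_mul_left (c : ℝ) (hc : 0 < c) (F : ℝ → ℝ≥0∞) (hF : Measurable F) :
    ∫⁻ t in Set.Ioi (0:ℝ), F (c * t) = ENNReal.ofReal c⁻¹ * ∫⁻ u in Set.Ioi (0:ℝ), F u := by
  have h2 : (fun t : ℝ => c * t) ⁻¹' Set.Ioi 0 = Set.Ioi 0 := by
    ext x
    simp only [Set.mem_preimage, Set.mem_Ioi]
    exact ⟨fun hx => by nlinarith, fun hx => by positivity⟩
  have h3 := setLIntegral_map (μ := (volume : Measure ℝ)) (s := Set.Ioi (0:ℝ))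
    measurableSet_Ioi hF (measurable_const_mul c)
  rw [h2] at h3
  rw [← h3, Real.map_volume_mul_left hc.ne', abs_of_pos (inv_pos.2 hc),
    Measure.restrict_smul, lintegral_smul_measure, smul_eq_mul]

lemma OmegaM_mulVec_le {d : ℕ} (hd : 1 ≤ d) (k : ℕ) (hk : 1 ≤ k) (p : ℝ) (hp : 1 ≤ p)
    (A : Matrix (Fin d) (Fin d) ℝ) (hA : IsUnit A.det) (f : (Fin d → ℝ) → ℝ) (t : ℝ) :
    OmegaM d k (ENNReal.ofReal p) (fun x => |(A⁻¹).det| * f ((A⁻¹).mulVec x)) t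
      ≤ ENNReal.ofReal (|A.det| ^ (-1 + 1 / p))
        * OmegaM d k (ENNReal.ofReal p) f (‖Matrix.toEuclideanCLM (𝕜 := ℝ) A⁻¹‖ * t) := by
  have hp0 : (0:ℝ) < p := lt_of_lt_of_le one_pos hp
  have hdet : A.det ≠ 0 := hA.ne_zero
  have hdetpos : 0 < |A.det| := abs_pos.2 hdet
  have hdetinv : (A⁻¹).det = A.det⁻¹ := by
    rw [Matrix.det_nonsing_inv, Ring.inverse_eq_inv']
  have hAinv : IsUnit (A⁻¹).det := by
    rw [hdetinv]; exact (isUnit_iff_ne_zero).2 (inv_ne_zero hdet)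
  have hPtop : (ENNReal.ofReal p) ≠ ∞ := ENNReal.ofReal_ne_top
  have hPinv : (1 / ENNReal.ofReal p).toReal = 1 / p := by
    rw [one_div, ENNReal.toReal_inv, ENNReal.toReal_ofReal hp0.le, one_div]
  refine iSup₂_le fun h hh => iSup₂_le fun τ hτ => ?_
  have ht0 : 0 ≤ t := le_trans (abs_nonneg τ) hτ
  rw [diffIter_comp_mulVec]
  set v := (A⁻¹).mulVec (τ • h) with hv
  have hsmul : (fun x => |(A⁻¹).det| * diffIter k v f ((A⁻¹).mulVec x))
      = |(A⁻¹).det| • (fun x => diffIter k v f ((A⁻¹).mulVec x)) := rfl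
  rw [hsmul, eLpNorm_const_smul, eLpNorm_comp_mulVec A⁻¹ hAinv _ hPtop, hPinv]
  -- constant computation
  have hconst : ‖|(A⁻¹).det|‖ₑ
        * ENNReal.ofReal |(A⁻¹).det⁻¹| ^ (1/p)
      = ENNReal.ofReal (|A.det| ^ (-1 + 1 / p)) := by
    have h1 : ‖|(A⁻¹).det|‖ₑ = ENNReal.ofReal |A.det|⁻¹ := by
      rw [← Real.enorm_eq_ofReal (by positivity)]
      simp [hdetinv, abs_inv]
    have h2 : |(A⁻¹).det⁻¹| = |A.det| := by rw [hdetinv, inv_inv]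
    rw [h1, h2, ENNReal.ofReal_rpow_of_pos hdetpos,
      ← ENNReal.ofReal_mul (by positivity),
      Real.rpow_add hdetpos, Real.rpow_neg_one]
  rw [← mul_assoc, hconst]
  refine mul_le_mul_right ?_ _
  -- now bound eLpNorm (diffIter k v f) by the modulus
  set w := (A⁻¹).mulVec h with hw
  have hvw : v = τ • w := by rw [hv, hw, Matrix.mulVec_smul]
  have hh0 : h ≠ 0 := by
    rintro rfl
    simp at hh
  have hw0 : w ≠ 0 := by
    intro hw0
    apply hh0
    have : A.mulVec w = 0 := by rw [hw0, Matrix.mulVec_zero]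
    rwa [hw, Matrix.mulVec_mulVec, Matrix.mul_nonsing_inv A hA, Matrix.one_mulVec] at this
  have hsumpos : 0 < ∑ i, w i ^ 2 := by
    obtain ⟨i, hi⟩ := Function.ne_iff.1 hw0
    have hi' : (0:ℝ) < w i ^ 2 := lt_of_le_of_ne (sq_nonneg _) (Ne.symm (pow_ne_zero 2 hi))
    exact Finset.sum_pos' (fun j _ => sq_nonneg _) ⟨i, Finset.mem_univ i, hi'⟩
  set r := Real.sqrt (∑ i, w i ^ 2) with hr
  have hrpos : 0 < r := Real.sqrt_pos.2 hsumpos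
  have hr2 : r ^ 2 = ∑ i, w i ^ 2 := Real.sq_sqrt hsumpos.le
  -- Euclidean norm facts
  set T := Matrix.toEuclideanCLM (𝕜 := ℝ) A⁻¹ with hT
  set H : EuclideanSpace ℝ (Fin d) := (WithLp.equiv 2 (Fin d → ℝ)).symm h with hH
  have hHnorm : ‖H‖ = 1 := by
    rw [EuclideanSpace.norm_eq]
    simp only [hH, WithLp.equiv_symm_apply, PiLp.toLp_apply, Real.norm_eq_abs, sq_abs]
    rw [hh, Real.sqrt_one]
  have hTH : T H = (WithLp.equiv 2 (Fin d → ℝ)).symm w := by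
    rw [hH, hT, WithLp.equiv_symm_apply, Matrix.toEuclideanCLM_toLp]
  have hTHnorm : ‖T H‖ = r := by
    rw [hTH, EuclideanSpace.norm_eq]
    simp only [WithLp.equiv_symm_apply, PiLp.toLp_apply, Real.norm_eq_abs, sq_abs]
    rfl
  have hrle : r ≤ ‖T‖ := by
    calc r = ‖T H‖ := hTHnorm.symm
      _ ≤ ‖T‖ * ‖H‖ := T.le_opNorm H
      _ = ‖T‖ := by rw [hHnorm, mul_one]
  set h' : Fin d → ℝ := r⁻¹ • w with hh'def
  have hh' : ∑ i, (h' i) ^ 2 = 1 := by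
    simp only [hh'def, Pi.smul_apply, smul_eq_mul, mul_pow]
    rw [← Finset.mul_sum, ← hr2]
    field_simp
  set τ' := τ * r with hτ'def
  have hττ' : τ' • h' = τ • w := by
    rw [hτ'def, hh'def, smul_smul]
    congr 1
    field_simp
  have hτ'le : |τ'| ≤ ‖T‖ * t := by
    rw [hτ'def, abs_mul, abs_of_pos hrpos]
    calc |τ| * r ≤ t * r := mul_le_mul_of_nonneg_right hτ hrpos.le
      _ ≤ t * ‖T‖ := mul_le_mul_of_nonneg_left hrle ht0
      _ = ‖T‖ * t := mul_comm _ _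
  have : eLpNorm (diffIter k v f) (ENNReal.ofReal p) volume
      = eLpNorm (diffIter k (τ' • h') f) (ENNReal.ofReal p) volume := by
    rw [hvw, hττ']
  rw [this]
  exact le_iSup₂_of_le h' hh' (le_iSup₂_of_le τ' hτ'le le_rfl)

/-- Besov-seminorm bound for the mixed density: for `0 < s < k`,
`(∫_0^∞ (t^{−s} Ω^k(f_A,t)_p)^q dt/t)^{1/q}
  ≤ |det A|^{−1+1/p} ‖A⁻¹‖^s (∫_0^∞ (u^{−s} Ω^k(f,u)_p)^q du/u)^{1/q}`. -/
theorem mixed_density_besov_seminorm_le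
    (d : ℕ) (hd : 1 ≤ d) (p q : ℝ) (hp : 1 ≤ p) (hq : 1 ≤ q)
    (k : ℕ) (hk : 1 ≤ k) (s : ℝ) (hs : 0 < s) (hsk : s < k)
    (A : Matrix (Fin d) (Fin d) ℝ) (hA : IsUnit A.det)
    (f : (Fin d → ℝ) → ℝ) (hf : MemLp f (ENNReal.ofReal p) volume) :
    (∫⁻ t in Set.Ioi (0 : ℝ),
        (ENNReal.ofReal (t ^ (-s))
            * OmegaM d k (ENNReal.ofReal p)
                (fun x => |(A⁻¹).det| * f ((A⁻¹).mulVec x)) t) ^ q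
          * ENNReal.ofReal t⁻¹) ^ (1 / q)
      ≤ ENNReal.ofReal
            (|A.det| ^ (-1 + 1 / p) * ‖Matrix.toEuclideanCLM (𝕜 := ℝ) A⁻¹‖ ^ s)
          * (∫⁻ u in Set.Ioi (0 : ℝ),
              (ENNReal.ofReal (u ^ (-s)) * OmegaM d k (ENNReal.ofReal p) f u) ^ q
                * ENNReal.ofReal u⁻¹) ^ (1 / q) := by
  have hq0 : (0:ℝ) < q := lt_of_lt_of_le one_pos hq
  have hq' : q ≠ 0 := hq0.ne'
  set P := ENNReal.ofReal p with hPdef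
  set T := Matrix.toEuclideanCLM (𝕜 := ℝ) A⁻¹ with hTdef
  set c := ‖T‖ with hcdef
  haveI : Nonempty (Fin d) := ⟨⟨0, hd⟩⟩
  have hcpos : 0 < c := by
    rw [hcdef, norm_pos_iff]
    intro h0
    have hx : ∀ x : Fin d → ℝ, (A⁻¹).mulVec x = 0 := by
      intro x
      funext i
      have h1 := Matrix.toEuclideanCLM_toLp (𝕜 := ℝ) A⁻¹ x
      rw [← hTdef, h0] at h1
      have h2 := congrFun (congrArg (WithLp.equiv 2 (Fin d → ℝ)) h1.symm) i
      simpa [Matrix.toLin'_apply] using h2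
    set e : Fin d → ℝ := fun _ => 1 with he
    have h3 : e = 0 := by
      have h4 : (A * A⁻¹).mulVec e = e := by
        rw [Matrix.mul_nonsing_inv A hA, Matrix.one_mulVec]
      rw [← Matrix.mulVec_mulVec, hx e, Matrix.mulVec_zero] at h4
      exact h4.symm
    have := congrFun h3 ⟨0, hd⟩
    simp [he] at this
  set C := ENNReal.ofReal (|A.det| ^ (-1 + 1 / p)) with hC
  set Ω : ℝ → ℝ≥0∞ := OmegaM d k P f with hΩ
  set F : ℝ → ℝ≥0∞ := fun u => (ENNReal.ofReal (u ^ (-s)) * Ω u) ^ q * ENNReal.ofReal u⁻¹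
    with hF
  have hFmeas : Measurable F := by
    apply Measurable.mul
    · apply Measurable.pow
      · exact ((measurable_id.pow measurable_const).ennreal_ofReal).mul
          ((OmegaM_mono (d := d) (k := k) (P := P) (f := f)).measurable)
      · exact measurable_const
    · exact measurable_inv.ennreal_ofReal
  have hCfin : C ≠ ∞ := ENNReal.ofReal_ne_top
  have hCq : C ^ q ≠ ∞ := ENNReal.rpow_ne_top_of_nonneg hq0.le hCfin
  -- Step 1: pointwise bound and pull out constants
  have step1 : (∫⁻ t in Set.Ioi (0:ℝ),
        (ENNReal.ofReal (t ^ (-s)) * OmegaM d k P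
          (fun x => |(A⁻¹).det| * f ((A⁻¹).mulVec x)) t) ^ q * ENNReal.ofReal t⁻¹)
      ≤ C ^ q * ∫⁻ t in Set.Ioi (0:ℝ),
          (ENNReal.ofReal (t ^ (-s)) * Ω (c * t)) ^ q * ENNReal.ofReal t⁻¹ := by
    rw [← lintegral_const_mul' _ _ hCq]
    refine setLIntegral_mono' measurableSet_Ioi fun t ht => ?_
    have hb := OmegaM_mulVec_le hd k hk p hp A hA f t
    calc (ENNReal.ofReal (t ^ (-s)) * OmegaM d k P
          (fun x => |(A⁻¹).det| * f ((A⁻¹).mulVec x)) t) ^ q * ENNReal.ofReal t⁻¹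
        ≤ (ENNReal.ofReal (t ^ (-s)) * (C * Ω (c * t))) ^ q * ENNReal.ofReal t⁻¹ := by
          gcongr
      _ = C ^ q * ((ENNReal.ofReal (t ^ (-s)) * Ω (c * t)) ^ q * ENNReal.ofReal t⁻¹) := by
          rw [show ENNReal.ofReal (t ^ (-s)) * (C * Ω (c * t))
              = C * (ENNReal.ofReal (t ^ (-s)) * Ω (c * t)) by ring,
            ENNReal.mul_rpow_of_nonneg _ _ hq0.le, mul_assoc]
  -- Step 2: substitution
  have step2 : (∫⁻ t in Set.Ioi (0:ℝ),
        (ENNReal.ofReal (t ^ (-s)) * Ω (c * t)) ^ q * ENNReal.ofReal t⁻¹)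
      = ENNReal.ofReal (c ^ s) ^ q * ∫⁻ u in Set.Ioi (0:ℝ), F u := by
    have key : ∀ t ∈ Set.Ioi (0:ℝ),
        (ENNReal.ofReal (t ^ (-s)) * Ω (c * t)) ^ q * ENNReal.ofReal t⁻¹
          = ENNReal.ofReal (c ^ s) ^ q * ENNReal.ofReal c * F (c * t) := by
      intro t ht
      have ht0 : (0:ℝ) < t := ht
      have e1 : ENNReal.ofReal ((c * t) ^ (-s))
          = ENNReal.ofReal (c ^ (-s)) * ENNReal.ofReal (t ^ (-s)) := by
        rw [← ENNReal.ofReal_mul (by positivity), ← Real.mul_rpow hcpos.le ht0.le]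
      have e2 : ENNReal.ofReal ((c * t))⁻¹ = ENNReal.ofReal c⁻¹ * ENNReal.ofReal t⁻¹ := by
        rw [mul_inv, ENNReal.ofReal_mul (by positivity)]
      have hcc : ENNReal.ofReal c * ENNReal.ofReal c⁻¹ = 1 := by
        rw [← ENNReal.ofReal_mul hcpos.le, mul_inv_cancel₀ hcpos.ne', ENNReal.ofReal_one]
      have hXY : ENNReal.ofReal (c ^ s) * (ENNReal.ofReal (c ^ (-s))
            * ENNReal.ofReal (t ^ (-s))) = ENNReal.ofReal (t ^ (-s)) := by
        rw [← mul_assoc, ← ENNReal.ofReal_mul (by positivity),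
          ← Real.rpow_add hcpos, add_neg_cancel, Real.rpow_zero, ENNReal.ofReal_one, one_mul]
      rw [hF]
      simp only
      rw [e1, e2,
        show (ENNReal.ofReal (c ^ s)) ^ q * ENNReal.ofReal c
            * ((ENNReal.ofReal (c ^ (-s)) * ENNReal.ofReal (t ^ (-s)) * Ω (c * t)) ^ q
              * (ENNReal.ofReal c⁻¹ * ENNReal.ofReal t⁻¹))
          = ((ENNReal.ofReal (c ^ s)) ^ q
              * (ENNReal.ofReal (c ^ (-s)) * ENNReal.ofReal (t ^ (-s)) * Ω (c * t)) ^ q)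
            * ((ENNReal.ofReal c * ENNReal.ofReal c⁻¹) * ENNReal.ofReal t⁻¹) by ring,
        ← ENNReal.mul_rpow_of_nonneg _ _ hq0.le, hcc, one_mul,
        show ENNReal.ofReal (c ^ s) * (ENNReal.ofReal (c ^ (-s))
            * ENNReal.ofReal (t ^ (-s)) * Ω (c * t))
          = (ENNReal.ofReal (c ^ s) * (ENNReal.ofReal (c ^ (-s))
            * ENNReal.ofReal (t ^ (-s)))) * Ω (c * t) by ring, hXY]
    rw [setLIntegral_congr_fun measurableSet_Ioi key,
      lintegral_const_mul' _ _ (by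
        exact ENNReal.mul_ne_top (ENNReal.rpow_ne_top_of_nonneg hq0.le ENNReal.ofReal_ne_top)
          ENNReal.ofReal_ne_top),
      lintegral_Ioi_comp_mul_left c hcpos F hFmeas]
    have hcc : ENNReal.ofReal c * ENNReal.ofReal c⁻¹ = 1 := by
      rw [← ENNReal.ofReal_mul hcpos.le, mul_inv_cancel₀ hcpos.ne', ENNReal.ofReal_one]
    calc ENNReal.ofReal (c ^ s) ^ q * ENNReal.ofReal c
          * (ENNReal.ofReal c⁻¹ * ∫⁻ u in Set.Ioi (0:ℝ), F u)
        = ENNReal.ofReal (c ^ s) ^ q * ((ENNReal.ofReal c * ENNReal.ofReal c⁻¹)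
            * ∫⁻ u in Set.Ioi (0:ℝ), F u) := by ring
      _ = ENNReal.ofReal (c ^ s) ^ q * ∫⁻ u in Set.Ioi (0:ℝ), F u := by rw [hcc, one_mul]
  -- Combine
  have hle : (∫⁻ t in Set.Ioi (0:ℝ),
        (ENNReal.ofReal (t ^ (-s)) * OmegaM d k P
          (fun x => |(A⁻¹).det| * f ((A⁻¹).mulVec x)) t) ^ q * ENNReal.ofReal t⁻¹)
      ≤ C ^ q * (ENNReal.ofReal (c ^ s) ^ q * ∫⁻ u in Set.Ioi (0:ℝ), F u) := by
    rw [← step2]; exact step1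
  have hmono := ENNReal.rpow_le_rpow hle (by positivity : (0:ℝ) ≤ 1/q)
  refine le_trans hmono ?_
  rw [← mul_assoc, ← ENNReal.mul_rpow_of_nonneg _ _ hq0.le,
    ENNReal.mul_rpow_of_nonneg _ _ (by positivity : (0:ℝ) ≤ 1/q),
    ← ENNReal.rpow_mul, mul_one_div, div_self hq', ENNReal.rpow_one,
    ← ENNReal.ofReal_mul (by positivity)]
end
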